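/- Let k > l ≥ 0 be integers and consider the planar system (dx/dt, dy/dt) = X_n(x,y) + X_m(x,y) with X_n(x,y) = ((x−y)(x²+y²)^l, (x+y)(x²+y²)^l) and X_m(x,y) = (−(x+y)(x²+y²)^k, (x−y)(x²+y²)^k). Then γ(t) = (cos 2t, sin 2t) is a nonconstant 2π-periodic solution of the system; in particular the unit circle x² + y² = 1 is a periodic orbit. -/

import Mathlib

/-- for `Xₙ(x,y) = ((x−y)(x²+y²)ˡ, (x+y)(x²+y²)ˡ)` and
`Xₘ(x,y) = (−(x+y)(x²+y²)ᵏ, (x−y)(x²+y²)ᵏ)` with `k > l ≥ 0`, the curve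
`γ(t) = (cos 2t, sin 2t)` is a nonconstant 2π-periodic solution of `(x',y') = Xₙ + Xₘ`,
and its image is the unit circle. -/
theorem stmt_15 (k l : ℕ) (hkl : l < k)
    (Xn Xm : ℝ × ℝ → ℝ × ℝ)
    (hXn : ∀ z : ℝ × ℝ, Xn z = ((z.1 - z.2) * (z.1 ^ 2 + z.2 ^ 2) ^ l,
      (z.1 + z.2) * (z.1 ^ 2 + z.2 ^ 2) ^ l))
    (hXm : ∀ z : ℝ × ℝ, Xm z = (-((z.1 + z.2) * (z.1 ^ 2 + z.2 ^ 2) ^ k),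
      (z.1 - z.2) * (z.1 ^ 2 + z.2 ^ 2) ^ k))
    (γ : ℝ → ℝ × ℝ)
    (hγ : ∀ t : ℝ, γ t = (Real.cos (2 * t), Real.sin (2 * t))) :
    (∀ t : ℝ, HasDerivAt γ (Xn (γ t) + Xm (γ t)) t) ∧
    (∀ t : ℝ, γ (t + 2 * Real.pi) = γ t) ∧
    (∃ t s : ℝ, γ t ≠ γ s) ∧
    Set.range γ = {z : ℝ × ℝ | z.1 ^ 2 + z.2 ^ 2 = 1} := by
  have hγf : γ = fun t => (Real.cos (2 * t), Real.sin (2 * t)) := funext hγ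
  subst hγf
  have hpyth : ∀ t : ℝ, Real.cos (2 * t) ^ 2 + Real.sin (2 * t) ^ 2 = 1 := by
    intro t
    rw [add_comm]; exact Real.sin_sq_add_cos_sq (2 * t)
  refine ⟨?_, ?_, ?_, ?_⟩
  · intro t
    have hc : HasDerivAt (fun t : ℝ => Real.cos (2 * t)) (-Real.sin (2 * t) * 2) t := by
      simpa [Function.comp_def] using (Real.hasDerivAt_cos (2 * t)).comp t
        ((hasDerivAt_id t).const_mul 2)
    have hs : HasDerivAt (fun t : ℝ => Real.sin (2 * t)) (Real.cos (2 * t) * 2) t := by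
      simpa [Function.comp_def] using (Real.hasDerivAt_sin (2 * t)).comp t
        ((hasDerivAt_id t).const_mul 2)
    have := hc.prodMk hs
    convert this using 1
    rw [hXn, hXm]
    simp only [Prod.mk_add_mk, Prod.mk.injEq]
    rw [hpyth t]
    constructor <;> ring
  · intro t
    have h2 : 2 * (t + 2 * Real.pi) = 2 * t + 2 * Real.pi + 2 * Real.pi := by ring
    simp [h2, Real.cos_add_two_pi, Real.sin_add_two_pi]
  · refine ⟨0, Real.pi / 4, ?_⟩
    intro h
    have h1 : Real.cos (2 * 0) = Real.cos (2 * (Real.pi / 4)) := congrArg Prod.fst h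
    have : (1 : ℝ) = 0 := by
      simpa [show 2 * (Real.pi / 4) = Real.pi / 2 by ring] using h1
    norm_num at this
  · ext z
    simp only [Set.mem_range, Set.mem_setOf_eq]
    constructor
    · rintro ⟨t, rfl⟩
      exact hpyth t
    · intro hz
      have habs : ‖(⟨z.1, z.2⟩ : ℂ)‖ = 1 := by
        rw [Complex.norm_def, Complex.normSq_mk]
        rw [show z.1 * z.1 + z.2 * z.2 = z.1 ^ 2 + z.2 ^ 2 by ring, hz, Real.sqrt_one]
      set θ := Complex.arg ⟨z.1, z.2⟩
      refine ⟨θ / 2, ?_⟩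
      have hc := Complex.cos_arg (x := ⟨z.1, z.2⟩) (by
        intro h
        rw [h] at habs
        simp at habs)
      have hs := Complex.sin_arg ⟨z.1, z.2⟩
      rw [habs] at hc hs
      simp only [div_one] at hc hs
      have : 2 * (θ / 2) = θ := by ring
      rw [this]
      exact Prod.ext hc.symm hs.symm |>.symm
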